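/- Let n ≥ 2. The map that sends a pair (w, p), where w is a tree representation on {1,…,n−1} and p ∈ {2,…,2n−2}, to the sequence obtained from w by inserting the value n so that it becomes the p-th entry and then appending the value n at the end, is a bijection from (tree representations on {1,…,n−1}) × {2,…,2n−2} onto the set of tree representations on {1,…,n}. -/

import Mathlib

/-- 0-indexed position of the first occurrence of `x` in `v`. -/
def firstOcc (v : List ℕ) (x : ℕ) : ℕ := v.idxOf x

/-- 0-indexed position of the second (= last, when `x` occurs exactly twice)
occurrence of `x` in `v`. -/
def secondOcc (v : List ℕ) (x : ℕ) : ℕ := v.length - 1 - v.reverse.idxOf x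

/-- `v` is a tree representation on `{1,…,n}`: it has length `2n`, entries in
`{1,…,n}`, every `i ∈ {1,…,n}` occurs exactly twice, the first entry is `1`,
for every `i ∈ {2,…,n}` the first occurrence of `i` appears strictly before the
second occurrence of `i-1`, and the second occurrence of `i` appears strictly
after the second occurrence of `i-1`. -/
def IsTreeRep (n : ℕ) (v : List ℕ) : Prop :=
  v.length = 2 * n ∧
  (∀ x ∈ v, 1 ≤ x ∧ x ≤ n) ∧
  (∀ i, 1 ≤ i → i ≤ n → v.count i = 2) ∧
  v.getD 0 0 = 1 ∧
  (∀ i, 2 ≤ i → i ≤ n → firstOcc v i < secondOcc v (i - 1)) ∧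
  (∀ i, 2 ≤ i → i ≤ n → secondOcc v (i - 1) < secondOcc v i)



lemma firstOcc_append_left {l₁ : List ℕ} (l₂ : List ℕ) {x : ℕ} (h : x ∈ l₁) :
    firstOcc (l₁ ++ l₂) x = firstOcc l₁ x := List.idxOf_append_of_mem h

lemma firstOcc_append_right {l₁ : List ℕ} (l₂ : List ℕ) {x : ℕ} (h : x ∉ l₁) :
    firstOcc (l₁ ++ l₂) x = l₁.length + firstOcc l₂ x := List.idxOf_append_of_notMem h

lemma firstOcc_lt_length {l : List ℕ} {x : ℕ} (h : x ∈ l) : firstOcc l x < l.length :=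
  List.idxOf_lt_length_iff.2 h

lemma secondOcc_lt_length {l : List ℕ} {x : ℕ} (h : x ∈ l) : secondOcc l x < l.length := by
  have h0 : 0 < l.length := List.length_pos_iff.2 (by rintro rfl; simp at h)
  unfold secondOcc; omega

lemma secondOcc_le {l : List ℕ} {x : ℕ} : secondOcc l x ≤ l.length - 1 := by
  unfold secondOcc; omega

lemma secondOcc_concat (u : List ℕ) (a : ℕ) : secondOcc (u ++ [a]) a = u.length := by
  unfold secondOcc
  rw [List.reverse_append]
  simp

lemma secondOcc_append_right (l₁ : List ℕ) {l₂ : List ℕ} {x : ℕ} (h : x ∈ l₂) :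
    secondOcc (l₁ ++ l₂) x = l₁.length + secondOcc l₂ x := by
  unfold secondOcc
  rw [List.reverse_append, List.idxOf_append_of_mem (by simpa using h)]
  have h1 : l₂.reverse.idxOf x < l₂.reverse.length := List.idxOf_lt_length_iff.2 (by simpa using h)
  simp only [List.length_append, List.length_reverse] at *
  omega

lemma secondOcc_append_left {l₁ : List ℕ} {l₂ : List ℕ} {x : ℕ} (h1 : x ∈ l₁) (h2 : x ∉ l₂) :
    secondOcc (l₁ ++ l₂) x = secondOcc l₁ x := by
  unfold secondOcc
  rw [List.reverse_append, List.idxOf_append_of_notMem (by simpa using h2)]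
  have h3 : l₁.reverse.idxOf x < l₁.reverse.length := List.idxOf_lt_length_iff.2 (by simpa using h1)
  simp only [List.length_append, List.length_reverse] at *
  omega

lemma secondOcc_cons {l : List ℕ} {x : ℕ} (a : ℕ) (h : x ∈ l) :
    secondOcc (a :: l) x = secondOcc l x + 1 := by
  have := secondOcc_append_right [a] h
  simpa [Nat.add_comm] using this

/-- position shift caused by inserting at index `q`. -/
def sig (q k : ℕ) : ℕ := if k < q then k else k + 1

lemma sig_lt_sig {q a b : ℕ} : sig q a < sig q b ↔ a < b := by
  unfold sig; split <;> split <;> omega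

lemma insertIdx_length_append (t d : List ℕ) (a : ℕ) :
    (t ++ d).insertIdx t.length a = t ++ a :: d := by
  induction t with
  | nil => simp
  | cons h t ih => simpa [List.insertIdx_succ_cons] using ih

lemma firstOcc_ins {t d : List ℕ} {x nn : ℕ} (hx : x ≠ nn) (hmem : x ∈ t ++ d) :
    firstOcc (t ++ (nn :: (d ++ [nn]))) x = sig t.length (firstOcc (t ++ d) x) := by
  by_cases ht : x ∈ t
  · rw [firstOcc_append_left _ ht, firstOcc_append_left _ ht, sig,
      if_pos (firstOcc_lt_length ht)]
  · have hd : x ∈ d := by rcases List.mem_append.1 hmem with h | h; exact absurd h ht; exact h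
    rw [firstOcc_append_right _ ht, firstOcc_append_right _ ht]
    have : firstOcc (nn :: (d ++ [nn])) x = firstOcc (d ++ [nn]) x + 1 := by
      unfold firstOcc
      rw [List.idxOf_cons_ne _ (by omega : nn ≠ x)]
    rw [this, firstOcc_append_left _ hd, sig, if_neg (by omega)]
    omega

lemma secondOcc_ins {t d : List ℕ} {x nn : ℕ} (hx : x ≠ nn) (hmem : x ∈ t ++ d) :
    secondOcc (t ++ (nn :: (d ++ [nn]))) x = sig t.length (secondOcc (t ++ d) x) := by
  by_cases hd : x ∈ d
  · rw [secondOcc_append_right t (show x ∈ nn :: (d ++ [nn]) by simp [hd]),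
      secondOcc_cons _ (by simp [hd]), secondOcc_append_left hd (by simp [hx]),
      secondOcc_append_right t hd, sig, if_neg (by omega)]
    omega
  · have ht : x ∈ t := by rcases List.mem_append.1 hmem with h | h; exact h; exact absurd h hd
    rw [secondOcc_append_left ht (by simp [hx, hd]), secondOcc_append_left ht hd, sig,
      if_pos (secondOcc_lt_length ht)]

lemma firstOcc_ins_self {t : List ℕ} (d : List ℕ) {nn : ℕ} (h : nn ∉ t) :
    firstOcc (t ++ (nn :: (d ++ [nn]))) nn = t.length := by
  rw [firstOcc_append_right _ h]
  simp [firstOcc]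

lemma secondOcc_ins_self (t d : List ℕ) (nn : ℕ) :
    secondOcc (t ++ (nn :: (d ++ [nn]))) nn = t.length + d.length + 1 := by
  have : t ++ (nn :: (d ++ [nn])) = (t ++ nn :: d) ++ [nn] := by simp
  rw [this, secondOcc_concat]
  simp; omega


lemma secondOcc_mono {m : ℕ} {w : List ℕ} (h : IsTreeRep m w) :
    ∀ k, k ≤ m → ∀ j, 1 ≤ j → j ≤ k → secondOcc w j ≤ secondOcc w k := by
  intro k
  induction k with
  | zero => omega
  | succ k ih =>
    intro hk j hj hjk
    rcases Nat.lt_or_ge j (k+1) with hlt | hge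
    · have h1 : secondOcc w j ≤ secondOcc w k := ih (by omega) j hj (by omega)
      have h2 : secondOcc w k < secondOcc w (k+1) := by
        have := h.2.2.2.2.2 (k+1) (by omega) hk
        simpa using this
      omega
    · have : j = k + 1 := by omega
      subst this; rfl

lemma secondOcc_strict_mono {m : ℕ} {w : List ℕ} (h : IsTreeRep m w)
    {j k : ℕ} (hj : 1 ≤ j) (hjk : j < k) (hk : k ≤ m) : secondOcc w j < secondOcc w k := by
  have h1 : secondOcc w j ≤ secondOcc w (k - 1) :=
    secondOcc_mono h (k-1) (by omega) j hj (by omega)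
  have h2 : secondOcc w (k - 1) < secondOcc w k := h.2.2.2.2.2 k (by omega) hk
  omega

/-- A tree representation on `{1,…,m}` (for `m ≥ 1`) ends with `m`. -/
lemma treeRep_last {m : ℕ} {w : List ℕ} (h : IsTreeRep m w) (hm : 1 ≤ m) :
    ∃ u, w = u ++ [m] ∧ u.length = 2 * m - 1 := by
  have hne : w ≠ [] := by
    intro he; have := h.1; rw [he] at this; simp at this; omega
  set j := w.getLast hne with hj
  have hw : w.dropLast ++ [j] = w := List.dropLast_append_getLast hne
  have hlen : w.dropLast.length = 2 * m - 1 := by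
    have := h.1; simp [List.length_dropLast, this]
  have hsj : secondOcc w j = 2 * m - 1 := by
    rw [← hw, secondOcc_concat, hlen]
  have hjm : 1 ≤ j ∧ j ≤ m := h.2.1 j (List.getLast_mem hne)
  have hsm : secondOcc w m = 2 * m - 1 := by
    have h1 : secondOcc w j ≤ secondOcc w m := secondOcc_mono h m le_rfl j hjm.1 hjm.2
    have h2 : secondOcc w m ≤ w.length - 1 := secondOcc_le
    rw [h.1] at h2
    omega
  have hjm' : j = m := by
    by_contra hne'
    have : secondOcc w j < secondOcc w m :=
      secondOcc_strict_mono h hjm.1 (by omega) le_rfl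
    omega
  exact ⟨w.dropLast, by rw [← hjm']; exact hw.symm, hlen⟩

lemma secondOcc_top {m : ℕ} {w : List ℕ} (h : IsTreeRep m w) (hm : 1 ≤ m) :
    secondOcc w m = 2 * m - 1 := by
  obtain ⟨u, hu, hlen⟩ := treeRep_last h hm
  rw [hu, secondOcc_concat, hlen]

lemma count_ins (t d : List ℕ) (nn x : ℕ) :
    (t ++ (nn :: (d ++ [nn]))).count x
      = (t ++ d).count x + (if x = nn then 2 else 0) := by
  simp only [List.count_append, List.count_cons, List.count_singleton]
  rcases eq_or_ne x nn with rfl | h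
  · simp; omega
  · simp [h, Ne.symm h, beq_iff_eq]

lemma forward {m : ℕ} (hm : 1 ≤ m) {t d : List ℕ} (hw : IsTreeRep m (t ++ d))
    (hq1 : 1 ≤ t.length) (hq2 : t.length ≤ 2 * m - 1) :
    IsTreeRep (m + 1) (t ++ ((m + 1) :: (d ++ [m + 1]))) := by
  set nn := m + 1 with hnn
  set V := t ++ (nn :: (d ++ [nn])) with hV
  have hlenw : t.length + d.length = 2 * m := by simpa using hw.1
  have hmemw : ∀ x, 1 ≤ x → x ≤ m → x ∈ t ++ d := fun x h1 h2 =>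
    List.count_pos_iff.1 (by rw [hw.2.2.1 x h1 h2]; omega)
  have hne : ∀ x, x ≤ m → x ≠ nn := by intro x h; omega
  have hVlen : V.length = 2 * (m + 1) := by
    have : V.length = t.length + d.length + 2 := by simp [hV]; omega
    omega
  refine ⟨hVlen, ?_, ?_, ?_, ?_, ?_⟩
  · intro x hx
    simp only [hV, List.mem_append, List.mem_cons, List.mem_singleton] at hx
    rcases hx with h | h | h | h
    · have := hw.2.1 x (by simp [h]); omega
    · omega
    · have := hw.2.1 x (by simp [h]); omega
    · have : x = nn := by simpa using h
      omega
  · intro i h1 h2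
    rw [count_ins]
    rcases eq_or_ne i nn with rfl | h
    · have hz : (t ++ d).count nn = 0 := List.count_eq_zero.2 (fun hmem => by
        have := hw.2.1 nn hmem; omega)
      rw [hz]; simp
    · rw [hw.2.2.1 i h1 (by omega)]; simp [h]
  · have h4 := hw.2.2.2.1
    rcases t with _ | ⟨a, t'⟩
    · simp at hq1
    · have ha : a = 1 := by simpa using h4
      simp [hV, ha]
  · intro i h1 h2
    rcases eq_or_ne i nn with rfl | h
    · -- i = m+1
      have hfz : firstOcc V nn = t.length := by
        apply firstOcc_ins_self
        intro hmem
        have := hw.2.1 nn (List.mem_append_left d hmem)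
        omega
      have hsz : secondOcc V (nn - 1) = 2 * m := by
        have hmm : (m : ℕ) ∈ t ++ d := hmemw m hm le_rfl
        have : secondOcc V m = sig t.length (secondOcc (t ++ d) m) :=
          secondOcc_ins (hne m le_rfl) (by simpa using hmm)
        have htop : secondOcc (t ++ d) m = 2 * m - 1 := secondOcc_top hw hm
        have : secondOcc V m = 2 * m := by
          rw [this, htop, sig, if_neg (by omega)]; omega
        simpa [hnn] using this
      rw [hfz, hsz]; omega
    · have hi : i ≤ m := by omega
      have him : i - 1 ≤ m := by omega
      have hi1 : (1:ℕ) ≤ i - 1 := by omega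
      rw [firstOcc_ins (hne i hi) (by simpa using hmemw i (by omega) hi),
        secondOcc_ins (hne (i-1) him) (by simpa using hmemw (i-1) hi1 him)]
      rw [sig_lt_sig]
      exact hw.2.2.2.2.1 i h1 hi
  · intro i h1 h2
    rcases eq_or_ne i nn with rfl | h
    · have hsz : secondOcc V (nn - 1) = 2 * m := by
        have hmm : (m : ℕ) ∈ t ++ d := hmemw m hm le_rfl
        have hh : secondOcc V m = sig t.length (secondOcc (t ++ d) m) :=
          secondOcc_ins (hne m le_rfl) (by simpa using hmm)
        have htop : secondOcc (t ++ d) m = 2 * m - 1 := secondOcc_top hw hm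
        have : secondOcc V m = 2 * m := by
          rw [hh, htop, sig, if_neg (by omega)]; omega
        simpa [hnn] using this
      have hs2 : secondOcc V nn = t.length + d.length + 1 := secondOcc_ins_self t d nn
      rw [hsz, hs2]; omega
    · have hi : i ≤ m := by omega
      have him : i - 1 ≤ m := by omega
      have hi1 : (1:ℕ) ≤ i - 1 := by omega
      rw [secondOcc_ins (hne i hi) (by simpa using hmemw i (by omega) hi),
        secondOcc_ins (hne (i-1) him) (by simpa using hmemw (i-1) hi1 him)]
      rw [sig_lt_sig]
      exact hw.2.2.2.2.2 i h1 hi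

lemma backward {m : ℕ} (hm : 1 ≤ m) {v : List ℕ} (hv : IsTreeRep (m + 1) v) :
    ∃ t d : List ℕ, v = t ++ ((m + 1) :: (d ++ [m + 1])) ∧ IsTreeRep m (t ++ d) ∧
      1 ≤ t.length ∧ t.length ≤ 2 * m - 1 ∧ t.length = firstOcc v (m + 1) := by
  set nn := m + 1 with hnn
  obtain ⟨u, huv, hulen⟩ := treeRep_last hv (by omega)
  have hcu : u.count nn = 1 := by
    have h2 := hv.2.2.1 nn (by omega) le_rfl
    rw [huv] at h2
    simp [List.count_append] at h2
    omega
  have hmemu : nn ∈ u := List.count_pos_iff.1 (by omega)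
  have hqlt : u.idxOf nn < u.length := List.idxOf_lt_length_iff.2 hmemu
  have hgu : u[u.idxOf nn]'hqlt = nn := List.getElem_idxOf hqlt
  set q := u.idxOf nn with hqdef
  set t := u.take q with htdef
  set d := u.drop (q + 1) with hddef
  have htlen : t.length = q := by
    rw [htdef, List.length_take]; omega
  have hdlen : d.length = u.length - (q + 1) := by
    rw [hddef, List.length_drop]
  have hsplit : u = t ++ nn :: d := by
    conv_lhs => rw [← List.take_append_drop q u]
    rw [← List.getElem_cons_drop (h := hqlt), hgu]
  have hV : v = t ++ (nn :: (d ++ [nn])) := by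
    rw [huv]
    conv_lhs => rw [hsplit]
    simp
  have hcnt : t.count nn + d.count nn = 0 := by
    rw [hsplit] at hcu
    simp [List.count_append, List.count_cons] at hcu
    omega
  have hnt : nn ∉ t := List.count_eq_zero.1 (by omega)
  have hnd : nn ∉ d := List.count_eq_zero.1 (by omega)
  have hqfo : t.length = firstOcc v nn := by
    rw [hV, firstOcc_ins_self d hnt]
  have hWlen : t.length + d.length = 2 * m := by omega
  -- counts in W
  have hcW : ∀ i, 1 ≤ i → i ≤ m → (t ++ d).count i = 2 := by
    intro i h1 h2
    have h3 := hv.2.2.1 i h1 (by omega)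
    rw [hV, count_ins] at h3
    simpa [show i ≠ nn by omega] using h3
  have hmemW : ∀ i, 1 ≤ i → i ≤ m → i ∈ t ++ d := fun i h1 h2 =>
    List.count_pos_iff.1 (by rw [hcW i h1 h2]; omega)
  have hneW : ∀ x, x ≤ m → x ≠ nn := by intro x h; omega
  -- lower bound on t.length
  have hq1 : 1 ≤ t.length := by
    by_contra hcon
    have ht0 : t = [] := List.length_eq_zero_iff.1 (by omega)
    have h4 := hv.2.2.2.1
    rw [hV, ht0] at h4
    simp at h4
    omega
  -- upper bound
  have hstop : secondOcc v nn = 2 * m + 1 := by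
    have := secondOcc_top hv (by omega)
    omega
  have hq2 : t.length ≤ 2 * m - 1 := by
    have h5 := hv.2.2.2.2.1 nn (by omega) le_rfl
    have h6 := hv.2.2.2.2.2 nn (by omega) le_rfl
    omega
  refine ⟨t, d, hV, ⟨by simpa using hWlen, ?_, hcW, ?_, ?_, ?_⟩, hq1, hq2, hqfo⟩
  · -- entries
    intro x hx
    have hxv : x ∈ v := by
      rw [hV]
      rcases List.mem_append.1 hx with h | h
      · simp [h]
      · simp [h]
    have hb := hv.2.1 x hxv
    have hxn : x ≠ nn := by
      rintro rfl
      rcases List.mem_append.1 hx with h | h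
      · exact hnt h
      · exact hnd h
    omega
  · -- head
    have h4 := hv.2.2.2.1
    rw [hV] at h4
    rcases t with _ | ⟨a, t'⟩
    · simp at hq1
    · simpa using h4
  · intro i h1 h2
    have h5 := hv.2.2.2.2.1 i h1 (by omega)
    rw [hV, firstOcc_ins (hneW i h2) (hmemW i (by omega) h2),
      secondOcc_ins (hneW (i-1) (by omega)) (hmemW (i-1) (by omega) (by omega))] at h5
    exact sig_lt_sig.1 h5
  · intro i h1 h2
    have h6 := hv.2.2.2.2.2 i h1 (by omega)
    rw [hV, secondOcc_ins (hneW i h2) (hmemW i (by omega) h2),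
      secondOcc_ins (hneW (i-1) (by omega)) (hmemW (i-1) (by omega) (by omega))] at h6
    exact sig_lt_sig.1 h6

lemma map_eq (w : List ℕ) {q : ℕ} (hq : q ≤ w.length) (nn : ℕ) :
    w.insertIdx q nn ++ [nn] = w.take q ++ (nn :: (w.drop q ++ [nn])) := by
  have ht : (w.take q).length = q := by rw [List.length_take]; omega
  have h1 : (w.take q ++ w.drop q).insertIdx ((w.take q).length) nn
      = w.take q ++ nn :: w.drop q := insertIdx_length_append _ _ _
  rw [ht, List.take_append_drop] at h1
  rw [h1]; simp

lemma firstOcc_map {w : List ℕ} {q nn : ℕ} (hq : q ≤ w.length) (hnn : nn ∉ w) :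
    firstOcc (w.insertIdx q nn ++ [nn]) nn = q := by
  rw [map_eq w hq nn,
    firstOcc_ins_self _ (fun h => hnn (List.take_subset _ _ h)), List.length_take]
  omega


/-- For `n ≥ 2`, the map sending a pair `(w, p)`, where `w` is a tree
representation on `{1,…,n−1}` and `p ∈ {2,…,2n−2}` (a 1-indexed position), to
the sequence obtained from `w` by inserting the value `n` so that it becomes
the `p`-th entry and then appending the value `n` at the end, is a bijection
onto the set of tree representations on `{1,…,n}`. -/
theorem stmt2 (n : ℕ) (hn : 2 ≤ n) :
    Set.BijOn (fun wp : List ℕ × ℕ => (wp.1.insertIdx (wp.2 - 1) n) ++ [n])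
      {wp : List ℕ × ℕ | IsTreeRep (n - 1) wp.1 ∧ 2 ≤ wp.2 ∧ wp.2 ≤ 2 * n - 2}
      {v : List ℕ | IsTreeRep n v} := by
  obtain ⟨m, rfl⟩ : ∃ m, n = m + 1 := ⟨n - 1, by omega⟩
  have hm : 1 ≤ m := by omega
  refine ⟨?_, ?_, ?_⟩
  · rintro ⟨w, p⟩ ⟨hw, hp2, hpu⟩
    simp only [Set.mem_setOf_eq] at hw hpu ⊢
    have hw' : IsTreeRep m w := by simpa using hw
    have hlenw : w.length = 2 * m := hw'.1
    have hq : p - 1 ≤ w.length := by omega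
    rw [map_eq w hq (m + 1)]
    refine forward hm ?_ ?_ ?_
    · rw [List.take_append_drop]; exact hw'
    · rw [List.length_take]; omega
    · rw [List.length_take]; omega
  · rintro ⟨w, p⟩ ⟨hw, hp2, hpu⟩ ⟨w', p'⟩ ⟨hw', hp2', hpu'⟩ heq
    simp only [Set.mem_setOf_eq] at hw hw' hpu hpu'
    have hw1 : IsTreeRep m w := by simpa using hw
    have hw1' : IsTreeRep m w' := by simpa using hw'
    simp only at heq
    have hnet : (m + 1) ∉ w := fun h => by have := hw1.2.1 _ h; omega
    have hnet' : (m + 1) ∉ w' := fun h => by have := hw1'.2.1 _ h; omega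
    have f1 : firstOcc (w.insertIdx (p - 1) (m + 1) ++ [m + 1]) (m + 1) = p - 1 :=
      firstOcc_map (by rw [hw1.1]; omega) hnet
    have f2 : firstOcc (w'.insertIdx (p' - 1) (m + 1) ++ [m + 1]) (m + 1) = p' - 1 :=
      firstOcc_map (by rw [hw1'.1]; omega) hnet'
    rw [heq, f2] at f1
    have hp : p = p' := by omega
    subst hp
    have hins : w.insertIdx (p - 1) (m + 1) = w'.insertIdx (p - 1) (m + 1) := by
      have := congrArg List.dropLast heq
      simpa using this
    have hww : w = w' := List.insertIdx_injective _ _ hins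
    simp [hww]
  · intro v hv
    simp only [Set.mem_setOf_eq] at hv
    obtain ⟨t, d, hVe, hWrep, h1, h2, hfo⟩ := backward hm hv
    refine ⟨(t ++ d, t.length + 1), ⟨?_, ?_, ?_⟩, ?_⟩
    · simpa using hWrep
    · simp only [Set.mem_setOf_eq]; omega
    · simp only [Set.mem_setOf_eq]; omega
    · show (t ++ d).insertIdx (t.length + 1 - 1) (m + 1) ++ [m + 1] = v
      rw [show t.length + 1 - 1 = t.length from by omega, insertIdx_length_append, hVe]
      simp
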